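/- Let H be the class of functions on ℝ^h of the form x ↦ C·max{0, w ⊙ x} interpreted as x ↦ C·σ(diag(w)x) with σ(z) = max_j z_j, where C = ∏_{j=2}^d M_p(j) and w ∈ ℝ^h satisfies ‖w‖_p ≤ M_p(1). With data points x_i = B·e_{(i mod h)} (scaled standard basis vectors) and loss ℓ(z) = z/γ, the empirical Rademacher complexity satisfies R̂_m(ℓ∘H) ≥ Ω(B ∏_{j=1}^d M_p(j) · h^{1/2 − 1/p} / (γ√m)). -/

import Mathlib

/-- A Rademacher sign from a boolean. -/
def sgn (b : Bool) : ℝ := if b then 1 else -1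

/-- Expectation over `ε` uniform on `{-1,+1}^m` (encoded as `Fin m → Bool`). -/
noncomputable def EB (m : ℕ) (f : (Fin m → Bool) → ℝ) : ℝ := (∑ ε, f ε) / 2 ^ m

/-- Empirical Rademacher complexity of a class `H` on data `x₁,…,x_m`. -/
noncomputable def rademacher {α : Type*} (m : ℕ) (x : Fin m → α) (H : Set (α → ℝ)) : ℝ :=
  EB m (fun ε => sSup ((fun h => (1 / (m:ℝ)) * ∑ i, sgn (ε i) * h (x i)) '' H))


lemma sgn_not (b : Bool) : sgn (!b) = - sgn b := by cases b <;> simp [sgn]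
lemma sgn_sq (b : Bool) : sgn b * sgn b = 1 := by cases b <;> simp [sgn]
lemma abs_sgn (b : Bool) : |sgn b| = 1 := by cases b <;> simp [sgn]

/-- sum over cube with a coordinate flip -/
def flipAt {m : ℕ} (a : Fin m) : (Fin m → Bool) ≃ (Fin m → Bool) where
  toFun ε := Function.update ε a (!ε a)
  invFun ε := Function.update ε a (!ε a)
  left_inv ε := by
    funext i
    by_cases hi : i = a
    · subst hi; simp [Function.update]
    · simp [Function.update, hi]
  right_inv ε := by
    funext i
    by_cases hi : i = a
    · subst hi; simp [Function.update]
    · simp [Function.update, hi]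

noncomputable def S {m : ℕ} (A : Finset (Fin m)) (ε : Fin m → Bool) : ℝ :=
  ∑ i ∈ A, sgn (ε i)

lemma S_flipAt {m : ℕ} {A : Finset (Fin m)} {a : Fin m} (ha : a ∉ A) (ε : Fin m → Bool) :
    S A (flipAt a ε) = S A ε := by
  unfold S
  refine Finset.sum_congr rfl fun i hi => ?_
  have : i ≠ a := fun h => ha (h ▸ hi)
  simp [flipAt, Function.update, this]

lemma sum_sgn_mul {m : ℕ} {A : Finset (Fin m)} {a : Fin m} (ha : a ∉ A) (j : ℕ) :
    ∑ ε : Fin m → Bool, sgn (ε a) * (S A ε) ^ j = 0 := by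
  have h1 : ∑ ε : Fin m → Bool, sgn (ε a) * (S A ε) ^ j
      = ∑ ε : Fin m → Bool, sgn ((flipAt a ε) a) * (S A (flipAt a ε)) ^ j :=
    (Fintype.sum_equiv (flipAt a) _ _ (fun ε => rfl)).symm
  have h2 : ∀ ε : Fin m → Bool, sgn ((flipAt a ε) a) * (S A (flipAt a ε)) ^ j
      = - (sgn (ε a) * (S A ε) ^ j) := by
    intro ε
    rw [S_flipAt ha]
    have : (flipAt a ε) a = !ε a := by simp [flipAt, Function.update]
    rw [this, sgn_not]
    ring
  have h3 : ∑ ε : Fin m → Bool, sgn (ε a) * (S A ε) ^ j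
      = - ∑ ε : Fin m → Bool, sgn (ε a) * (S A ε) ^ j := by
    calc ∑ ε : Fin m → Bool, sgn (ε a) * (S A ε) ^ j
        = ∑ ε : Fin m → Bool, sgn ((flipAt a ε) a) * (S A (flipAt a ε)) ^ j := h1
      _ = ∑ ε : Fin m → Bool, - (sgn (ε a) * (S A ε) ^ j) := Finset.sum_congr rfl (fun ε _ => h2 ε)
      _ = - ∑ ε : Fin m → Bool, sgn (ε a) * (S A ε) ^ j := by rw [Finset.sum_neg_distrib]
  linarith

lemma card_cube (m : ℕ) : (Finset.univ : Finset (Fin m → Bool)).card = 2 ^ m := by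
  simp [Finset.card_univ]

lemma sum_S_sq {m : ℕ} (A : Finset (Fin m)) :
    ∑ ε : Fin m → Bool, (S A ε) ^ 2 = 2 ^ m * (A.card : ℝ) := by
  induction A using Finset.induction_on with
  | empty => simp [S]
  | @insert a A ha ih =>
    have hins : ∀ ε : Fin m → Bool, S (insert a A) ε = sgn (ε a) + S A ε := by
      intro ε; unfold S; rw [Finset.sum_insert ha]
    have expand : ∀ ε : Fin m → Bool, (S (insert a A) ε) ^ 2
        = 1 + 2 * (sgn (ε a) * (S A ε) ^ 1) + (S A ε) ^ 2 := by
      intro ε; rw [hins ε]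
      have := sgn_sq (ε a); nlinarith [this]
    rw [Finset.sum_congr rfl (fun ε _ => expand ε)]
    rw [Finset.sum_add_distrib, Finset.sum_add_distrib, ← Finset.mul_sum,
      sum_sgn_mul ha 1, ih]
    rw [Finset.sum_const, card_cube]
    push_cast [Finset.card_insert_of_notMem ha]
    ring

lemma sum_S_pow4 {m : ℕ} (A : Finset (Fin m)) :
    ∑ ε : Fin m → Bool, (S A ε) ^ 4 = 2 ^ m * (3 * (A.card : ℝ) ^ 2 - 2 * A.card) := by
  induction A using Finset.induction_on with
  | empty => simp [S]
  | @insert a A ha ih =>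
    have hins : ∀ ε : Fin m → Bool, S (insert a A) ε = sgn (ε a) + S A ε := by
      intro ε; unfold S; rw [Finset.sum_insert ha]
    have expand : ∀ ε : Fin m → Bool, (S (insert a A) ε) ^ 4
        = 1 + 4 * (sgn (ε a) * (S A ε) ^ 1) + 6 * (S A ε) ^ 2
          + 4 * (sgn (ε a) * (S A ε) ^ 3) + (S A ε) ^ 4 := by
      intro ε; rw [hins ε]
      have hx2 : sgn (ε a) ^ 2 = 1 := by rw [sq]; exact sgn_sq (ε a)
      linear_combination (sgn (ε a) ^ 2 + 1 + 4 * S A ε * sgn (ε a) + 6 * (S A ε) ^ 2) * hx2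
    rw [Finset.sum_congr rfl (fun ε _ => expand ε)]
    rw [Finset.sum_add_distrib, Finset.sum_add_distrib, Finset.sum_add_distrib,
      Finset.sum_add_distrib, ← Finset.mul_sum, ← Finset.mul_sum, ← Finset.mul_sum,
      sum_sgn_mul ha 1, sum_sgn_mul ha 3, sum_S_sq, ih, Finset.sum_const, card_cube]
    push_cast [Finset.card_insert_of_notMem ha]
    ring

lemma sum_abs_S {m : ℕ} (A : Finset (Fin m)) :
    2 ^ m * Real.sqrt ((A.card : ℝ) / 3) ≤ ∑ ε : Fin m → Bool, |S A ε| := by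
  rcases Nat.eq_zero_or_pos A.card with h0 | hpos
  · rw [h0]
    simp only [Nat.cast_zero, zero_div, Real.sqrt_zero, mul_zero]
    exact Finset.sum_nonneg fun ε _ => abs_nonneg _
  set n : ℝ := (A.card : ℝ) with hn
  have hn1 : (1 : ℝ) ≤ n := by unfold n; exact_mod_cast hpos
  have hpow : (0 : ℝ) < 2 ^ m := by positivity
  set I1 : ℝ := ∑ ε : Fin m → Bool, |S A ε| with hI1
  set J : ℝ := ∑ ε : Fin m → Bool, |S A ε| * (S A ε) ^ 2 with hJ
  have hI1nn : 0 ≤ I1 := Finset.sum_nonneg fun ε _ => abs_nonneg _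
  have hJnn : 0 ≤ J := Finset.sum_nonneg fun ε _ => by positivity
  have hcs1 : (∑ ε : Fin m → Bool, (S A ε) ^ 2) ^ 2 ≤ I1 * J := by
    have := Finset.sum_mul_sq_le_sq_mul_sq (Finset.univ : Finset (Fin m → Bool))
      (fun ε => Real.sqrt |S A ε|) (fun ε => Real.sqrt |S A ε| * |S A ε|)
    calc (∑ ε : Fin m → Bool, (S A ε) ^ 2) ^ 2
        = (∑ ε : Fin m → Bool,
            Real.sqrt |S A ε| * (Real.sqrt |S A ε| * |S A ε|)) ^ 2 := by
          congr 1
          refine Finset.sum_congr rfl fun ε _ => ?_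
          rw [← mul_assoc, Real.mul_self_sqrt (abs_nonneg _), ← abs_mul, ← sq, abs_of_nonneg (sq_nonneg _)]
      _ ≤ (∑ ε : Fin m → Bool, Real.sqrt |S A ε| ^ 2)
            * ∑ ε : Fin m → Bool, (Real.sqrt |S A ε| * |S A ε|) ^ 2 := this
      _ = I1 * J := by
          congr 1
          · refine Finset.sum_congr rfl fun ε _ => Real.sq_sqrt (abs_nonneg _)
          · refine Finset.sum_congr rfl fun ε _ => ?_
            rw [mul_pow, Real.sq_sqrt (abs_nonneg _), sq_abs]
  have hcs2 : J ^ 2 ≤ (∑ ε : Fin m → Bool, (S A ε) ^ 2)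
      * ∑ ε : Fin m → Bool, (S A ε) ^ 4 := by
    have := Finset.sum_mul_sq_le_sq_mul_sq (Finset.univ : Finset (Fin m → Bool))
      (fun ε => |S A ε|) (fun ε => (S A ε) ^ 2)
    calc J ^ 2 = (∑ ε : Fin m → Bool, |S A ε| * (S A ε) ^ 2) ^ 2 := rfl
      _ ≤ (∑ ε : Fin m → Bool, |S A ε| ^ 2) * ∑ ε : Fin m → Bool, ((S A ε) ^ 2) ^ 2 := this
      _ = _ := by
          congr 1
          · exact Finset.sum_congr rfl fun ε _ => sq_abs _
          · exact Finset.sum_congr rfl fun ε _ => by ring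
  rw [sum_S_sq] at hcs1 hcs2
  rw [sum_S_pow4] at hcs2
  -- conclude I1^2 ≥ 2^(2m) n / 3
  have key : 2 ^ m * 2 ^ m * n / 3 ≤ I1 ^ 2 := by
    have h4 : (2 ^ m * n) ^ 2 * ((2:ℝ) ^ m * n) ^ 2 ≤ (I1 * J) * (I1 * J) := by
      have := mul_le_mul hcs1 hcs1 (sq_nonneg _) (mul_nonneg hI1nn hJnn)
      calc (2 ^ m * n) ^ 2 * ((2:ℝ) ^ m * n) ^ 2 = ((2:ℝ) ^ m * n) ^ 2 * (2 ^ m * n) ^ 2 := by ring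
        _ ≤ (I1 * J) * (I1 * J) := this
    have h5 : (I1 * J) * (I1 * J) ≤ I1 ^ 2 * (2 ^ m * n * (2 ^ m * (3 * n ^ 2 - 2 * n))) := by
      calc (I1 * J) * (I1 * J) = I1 ^ 2 * J ^ 2 := by ring
        _ ≤ I1 ^ 2 * (2 ^ m * n * (2 ^ m * (3 * n ^ 2 - 2 * n))) :=
            mul_le_mul_of_nonneg_left hcs2 (sq_nonneg _)
    have h6 : I1 ^ 2 * (2 ^ m * n * (2 ^ m * (3 * n ^ 2 - 2 * n)))
        ≤ I1 ^ 2 * (2 ^ m * n * (2 ^ m * (3 * n ^ 2))) := by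
      have : (2:ℝ) ^ m * (3 * n ^ 2 - 2 * n) ≤ 2 ^ m * (3 * n ^ 2) := by nlinarith
      have h7 : (2:ℝ) ^ m * n * (2 ^ m * (3 * n ^ 2 - 2 * n)) ≤ 2 ^ m * n * (2 ^ m * (3 * n ^ 2)) := by
        apply mul_le_mul_of_nonneg_left this
        positivity
      exact mul_le_mul_of_nonneg_left h7 (sq_nonneg _)
    have h8 : (2 ^ m * n) ^ 2 * ((2:ℝ) ^ m * n) ^ 2 ≤ I1 ^ 2 * (2 ^ m * n * (2 ^ m * (3 * n ^ 2))) :=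
      le_trans h4 (le_trans h5 h6)
    have hden : (0:ℝ) < 2 ^ m * n * (2 ^ m * (3 * n ^ 2)) := by positivity
    rw [div_le_iff₀ (by norm_num : (0:ℝ) < 3)] at *
    nlinarith [h8, hpow, hn1, sq_nonneg I1]
  have hs : Real.sqrt (2 ^ m * 2 ^ m * n / 3) ≤ I1 := by
    calc Real.sqrt (2 ^ m * 2 ^ m * n / 3) ≤ Real.sqrt (I1 ^ 2) := Real.sqrt_le_sqrt key
      _ = I1 := Real.sqrt_sq hI1nn
  calc 2 ^ m * Real.sqrt (n / 3)
      = Real.sqrt (((2:ℝ) ^ m) ^ 2) * Real.sqrt (n / 3) := by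
        rw [Real.sqrt_sq (le_of_lt hpow)]
    _ = Real.sqrt (((2:ℝ) ^ m) ^ 2 * (n / 3)) := (Real.sqrt_mul (sq_nonneg _) _).symm
    _ = Real.sqrt (2 ^ m * 2 ^ m * n / 3) := by ring_nf
    _ ≤ I1 := hs

def flipAll (m : ℕ) : (Fin m → Bool) ≃ (Fin m → Bool) where
  toFun ε := fun i => !ε i
  invFun ε := fun i => !ε i
  left_inv ε := by funext i; simp
  right_inv ε := by funext i; simp

lemma sum_max_S {m : ℕ} (A : Finset (Fin m)) :
    ∑ ε : Fin m → Bool, max (S A ε) 0 = (∑ ε : Fin m → Bool, |S A ε|) / 2 := by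
  have hflip : ∀ ε, S A (flipAll m ε) = - S A ε := by
    intro ε
    unfold S
    rw [← Finset.sum_neg_distrib]
    exact Finset.sum_congr rfl fun i _ => by simp [flipAll, sgn_not]
  have h1 : ∑ ε : Fin m → Bool, max (S A ε) 0 = ∑ ε : Fin m → Bool, max (- S A ε) 0 := by
    exact Fintype.sum_equiv (flipAll m) _ _ (fun ε => by rw [hflip, neg_neg])
  have h2 : ∑ ε : Fin m → Bool, (max (S A ε) 0 + max (- S A ε) 0)
      = ∑ ε : Fin m → Bool, |S A ε| := by
    refine Finset.sum_congr rfl fun ε _ => ?_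
    rcases le_total (S A ε) 0 with h | h
    · rw [max_eq_right h, max_eq_left (by linarith), abs_of_nonpos h]; ring
    · rw [max_eq_left h, max_eq_right (by linarith), abs_of_nonneg h]; ring
  rw [Finset.sum_add_distrib] at h2
  linarith

lemma card_fiber {h m : ℕ} (h0 : 0 < h) (hm : h ≤ m) (k : Fin h) :
    m / h ≤ (Finset.univ.filter (fun i : Fin m => (i : ℕ) % h = (k : ℕ))).card := by
  have hm0 : 0 < m := lt_of_lt_of_le h0 hm
  have hlt : ∀ t < m / h, (k : ℕ) + t * h < m := by
    intro t ht
    have h1 : t + 1 ≤ m / h := ht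
    have h2 : (t + 1) * h ≤ (m / h) * h := Nat.mul_le_mul_right h h1
    have h3 : (m / h) * h ≤ m := Nat.div_mul_le_self m h
    have h4 : (k : ℕ) < h := k.isLt
    calc (k : ℕ) + t * h < h + t * h := by omega
      _ = (t + 1) * h := by ring
      _ ≤ m := le_trans h2 h3
  have := Finset.card_le_card_of_injOn
    (f := fun t : ℕ => (⟨((k : ℕ) + t * h) % m, Nat.mod_lt _ hm0⟩ : Fin m))
    (s := Finset.range (m / h))
    (t := Finset.univ.filter (fun i : Fin m => (i : ℕ) % h = (k : ℕ)))
    (by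
      intro t ht
      simp only [Finset.mem_coe, Finset.mem_range] at ht
      simp only [Finset.mem_coe, Finset.mem_filter, Finset.mem_univ, true_and]
      rw [Nat.mod_eq_of_lt (hlt t ht)]
      simp [Nat.add_mul_mod_self_right, Nat.mod_eq_of_lt k.isLt])
    (by
      intro t1 ht1 t2 ht2 heq
      simp only [Finset.coe_range, Set.mem_Iio] at ht1 ht2
      have := congrArg (fun i : Fin m => (i : ℕ)) heq
      simp only at this
      rw [Nat.mod_eq_of_lt (hlt t1 ht1), Nat.mod_eq_of_lt (hlt t2 ht2)] at this
      have := Nat.add_left_cancel this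
      exact Nat.eq_of_mul_eq_mul_right h0 this)
  simpa using this

/-- lower bound via the class `x ↦ ∏_{j=2}^d M_p(j) · σ(diag(w)x)` with
`σ(z) = max_j z_j`, `‖w‖_p ≤ M_p(1)`, loss `ℓ(z) = z/γ`, and data `x_i = B·e_{i mod h}`:
the Rademacher complexity is `Ω(B·∏_j M_p(j)·h^{1/2−1/p}/(γ√m))`. -/
theorem rad_lower_bound_schatten :
    ∃ c : ℝ, 0 < c ∧
      ∀ (h d m : ℕ) (p : ℝ), 0 < h → 1 ≤ d → h ≤ m → 1 ≤ p →
      ∀ (B γ : ℝ) (Mp : ℕ → ℝ), 0 < B → 0 < γ → (∀ j, 0 < Mp j) →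
      rademacher m
          (fun i : Fin m =>
            (WithLp.toLp 2 (fun j : Fin h => if (j : ℕ) = (i : ℕ) % h then B else 0) :
              EuclideanSpace ℝ (Fin h)))
          {f | ∃ w : Fin h → ℝ, (∑ j, |w j| ^ p) ^ (1 / p) ≤ Mp 0 ∧
              f = fun x => (1 / γ) *
                ((∏ j ∈ Finset.Ico 1 d, Mp j) * ⨆ j : Fin h, w j * x j)} ≥
        c * B * (∏ j ∈ Finset.range d, Mp j) * (h : ℝ) ^ ((1 : ℝ) / 2 - 1 / p) /
          (γ * Real.sqrt m) := by
  refine ⟨1/10, by norm_num, ?_⟩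
  intro h d m p h0 hd hm hp B γ Mp hB hγ hMp
  have hm0 : 0 < m := lt_of_lt_of_le h0 hm
  have hmR : (0:ℝ) < (m:ℝ) := by exact_mod_cast hm0
  have hp0 : (0:ℝ) < p := lt_of_lt_of_le one_pos hp
  have hC : (0:ℝ) < ∏ j ∈ Finset.Ico 1 d, Mp j := Finset.prod_pos fun j _ => hMp j
  set C : ℝ := ∏ j ∈ Finset.Ico 1 d, Mp j with hCdef
  have hM0 : 0 < Mp 0 := hMp 0
  have hhR : (0:ℝ) < (h:ℝ) := by exact_mod_cast h0
  set r : ℝ := (h:ℝ) ^ (-(1/p)) with hrdef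
  have hr : 0 < r := Real.rpow_pos_of_pos hhR _
  set a : ℝ := Mp 0 * r with hadef
  have ha : 0 < a := mul_pos hM0 hr
  set i₀ : Fin m → Fin h := fun i => ⟨(i:ℕ) % h, Nat.mod_lt _ h0⟩ with hi₀
  set A : Fin h → Finset (Fin m) :=
    fun k => Finset.univ.filter (fun i => i₀ i = k) with hAdef
  set w : (Fin m → Bool) → Fin h → ℝ :=
    fun ε k => if 0 ≤ S (A k) ε then a else 0 with hwdef
  have hw_mem : ∀ ε k, w ε k = a ∨ w ε k = 0 := by
    intro ε k
    by_cases hs : 0 ≤ S (A k) ε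
    · left; simp [hwdef, hs]
    · right; simp [hwdef, hs]
  have hw_nonneg : ∀ ε k, 0 ≤ w ε k := by
    intro ε k; rcases hw_mem ε k with h' | h' <;> simp [h', ha.le]
  -- the data points
  set x : Fin m → EuclideanSpace ℝ (Fin h) :=
    fun i => (WithLp.toLp 2 (fun j : Fin h => if (j : ℕ) = (i : ℕ) % h then B else 0) :
      EuclideanSpace ℝ (Fin h)) with hxdef
  -- norm bound for our w
  haveI : Nonempty (Fin h) := ⟨⟨0, h0⟩⟩
  have hrp : r ^ p = ((h:ℝ))⁻¹ := by
    rw [hrdef, ← Real.rpow_mul hhR.le]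
    rw [show -(1/p)*p = -1 by field_simp, Real.rpow_neg_one]
  have hwnorm : ∀ ε, (∑ j, |w ε j| ^ p) ^ (1/p) ≤ Mp 0 := by
    intro ε
    have har : a ^ p = (Mp 0) ^ p * ((h:ℝ))⁻¹ := by
      rw [hadef, Real.mul_rpow hM0.le hr.le, hrp]
    have hterm : ∀ k : Fin h, |w ε k| ^ p ≤ (Mp 0) ^ p * ((h:ℝ))⁻¹ := by
      intro k
      rcases hw_mem ε k with h' | h' <;> rw [h']
      · rw [abs_of_pos ha, har]
      · rw [abs_zero, Real.zero_rpow (ne_of_gt hp0)]; positivity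
    have hsum : (∑ j, |w ε j| ^ p) ≤ (Mp 0) ^ p := by
      calc ∑ j, |w ε j| ^ p ≤ ∑ _j : Fin h, (Mp 0) ^ p * ((h:ℝ))⁻¹ :=
            Finset.sum_le_sum fun j _ => hterm j
        _ = (h : ℝ) * ((Mp 0) ^ p * ((h:ℝ))⁻¹) := by
            rw [Finset.sum_const, Finset.card_univ, Fintype.card_fin, nsmul_eq_mul]
        _ = (Mp 0) ^ p := by field_simp
    calc (∑ j, |w ε j| ^ p) ^ (1/p)
        ≤ ((Mp 0) ^ p) ^ (1/p) :=
          Real.rpow_le_rpow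
            (Finset.sum_nonneg fun j _ => Real.rpow_nonneg (abs_nonneg _) p)
            hsum (by positivity)
      _ = Mp 0 := by
          rw [← Real.rpow_mul hM0.le, mul_one_div_cancel (ne_of_gt hp0), Real.rpow_one]
  -- membership
  set Hs : Set (EuclideanSpace ℝ (Fin h) → ℝ) :=
    {f | ∃ w' : Fin h → ℝ, (∑ j, |w' j| ^ p) ^ (1 / p) ≤ Mp 0 ∧
        f = fun x => (1 / γ) * (C * ⨆ j : Fin h, w' j * x j)} with hHs
  have hmem : ∀ ε, (fun z : EuclideanSpace ℝ (Fin h) =>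
      (1/γ) * (C * ⨆ j : Fin h, w ε j * z j)) ∈ Hs :=
    fun ε => ⟨w ε, hwnorm ε, rfl⟩
  -- bounded above
  have hbdd : ∀ ε : Fin m → Bool, BddAbove
      ((fun f => (1 / (m:ℝ)) * ∑ i, sgn (ε i) * f (x i)) '' Hs) := by
    intro ε
    refine ⟨(1/γ) * (C * (Mp 0 * B)), ?_⟩
    rintro v ⟨f, hf, rfl⟩
    obtain ⟨w', hw'1, rfl⟩ := hf
    have hw'bd : ∀ j, |w' j| ≤ Mp 0 := by
      intro j
      have h1 : |w' j| ^ p ≤ ∑ j', |w' j'| ^ p :=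
        Finset.single_le_sum (fun j' _ => Real.rpow_nonneg (abs_nonneg _) p)
          (Finset.mem_univ j)
      calc |w' j| = (|w' j| ^ p) ^ (1/p) := by
            rw [← Real.rpow_mul (abs_nonneg _), mul_one_div_cancel (ne_of_gt hp0),
              Real.rpow_one]
        _ ≤ (∑ j', |w' j'| ^ p) ^ (1/p) :=
            Real.rpow_le_rpow (Real.rpow_nonneg (abs_nonneg _) p) h1 (by positivity)
        _ ≤ Mp 0 := hw'1
    have hsupbd : ∀ i : Fin m, |⨆ j : Fin h, w' j * (x i) j| ≤ Mp 0 * B := by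
      intro i
      have hxv : ∀ j : Fin h, (x i) j = if (j : ℕ) = (i : ℕ) % h then B else 0 := fun j => rfl
      have htb : ∀ j : Fin h, |w' j * (x i) j| ≤ Mp 0 * B := by
        intro j
        rw [abs_mul, hxv j]
        have : |if (j : ℕ) = (i : ℕ) % h then B else 0| ≤ B := by
          split <;> simp [abs_of_pos hB, hB.le]
        exact mul_le_mul (hw'bd j) this (abs_nonneg _) hM0.le
      rw [abs_le]
      constructor
      · have h1 : -(Mp 0 * B) ≤ w' ⟨0, h0⟩ * (x i) ⟨0, h0⟩ :=
          neg_le_of_neg_le (by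
            have := htb ⟨0, h0⟩
            rw [abs_le] at this
            linarith [this.1])
        exact le_trans h1 (le_ciSup (f := fun j : Fin h => w' j * (x i) j) (Set.Finite.bddAbove (Set.finite_range _)) (⟨0, h0⟩ : Fin h))
      · exact ciSup_le fun j => le_trans (le_abs_self _) (htb j)
    calc (1 / (m:ℝ)) * ∑ i, sgn (ε i) * ((1/γ) * (C * ⨆ j : Fin h, w' j * (x i) j))
        ≤ (1 / (m:ℝ)) * ∑ i : Fin m, (1/γ) * (C * (Mp 0 * B)) := by
          apply mul_le_mul_of_nonneg_left ?_ (by positivity)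
          refine Finset.sum_le_sum fun i _ => ?_
          calc sgn (ε i) * ((1/γ) * (C * ⨆ j : Fin h, w' j * (x i) j))
              ≤ |sgn (ε i) * ((1/γ) * (C * ⨆ j : Fin h, w' j * (x i) j))| := le_abs_self _
            _ = |⨆ j : Fin h, w' j * (x i) j| * ((1/γ) * C) := by
                rw [abs_mul, abs_mul, abs_mul]
                rw [show |sgn (ε i)| = 1 by unfold sgn; split <;> norm_num]
                rw [abs_of_pos (by positivity : (0:ℝ) < 1/γ), abs_of_pos hC]
                ring
            _ ≤ (Mp 0 * B) * ((1/γ) * C) :=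
                mul_le_mul_of_nonneg_right (hsupbd i) (by positivity)
            _ = (1/γ) * (C * (Mp 0 * B)) := by ring
      _ = (1 / (m:ℝ)) * ((m:ℝ) * ((1/γ) * (C * (Mp 0 * B)))) := by
          rw [Finset.sum_const, Finset.card_univ, Fintype.card_fin, nsmul_eq_mul]
      _ ≤ (1/γ) * (C * (Mp 0 * B)) := by
          rw [← mul_assoc, one_div_mul_cancel (ne_of_gt hmR), one_mul]
  -- the sup computation at data points
  have hsup : ∀ ε i, (⨆ j : Fin h, w ε j * (x i) j) = w ε (i₀ i) * B := by
    intro ε i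
    have hxv : ∀ j : Fin h, (x i) j = if (j : ℕ) = (i : ℕ) % h then B else 0 := fun j => rfl
    apply le_antisymm
    · apply ciSup_le
      intro j
      rw [hxv j]
      by_cases hj : (j : ℕ) = (i : ℕ) % h
      · have : j = i₀ i := by
          apply Fin.ext
          simpa [hi₀] using hj
        rw [if_pos hj, this]
      · rw [if_neg hj, mul_zero]
        exact mul_nonneg (hw_nonneg ε _) hB.le
    · have h1 := le_ciSup (f := fun j : Fin h => w ε j * (x i) j)
        (Set.Finite.bddAbove (Set.finite_range _)) (i₀ i)
      have h2 : w ε (i₀ i) * (x i) (i₀ i) = w ε (i₀ i) * B := by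
        rw [hxv (i₀ i), if_pos]
        simp [hi₀]
      rw [h2] at h1
      exact h1
  -- value of our function
  have hval : ∀ ε : Fin m → Bool,
      ∑ i, sgn (ε i) * ((1/γ) * (C * ⨆ j : Fin h, w ε j * (x i) j))
        = (C * B / γ) * ∑ k : Fin h, a * max (S (A k) ε) 0 := by
    intro ε
    have step1 : ∀ i : Fin m, sgn (ε i) * ((1/γ) * (C * ⨆ j : Fin h, w ε j * (x i) j))
        = (C * B / γ) * (w ε (i₀ i) * sgn (ε i)) := by
      intro i
      rw [hsup ε i]
      ring
    rw [Finset.sum_congr rfl fun i _ => step1 i, ← Finset.mul_sum]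
    congr 1
    have hfib := Finset.sum_fiberwise (Finset.univ : Finset (Fin m)) i₀
      (fun i => w ε (i₀ i) * sgn (ε i))
    rw [← hfib]
    refine Finset.sum_congr rfl fun k _ => ?_
    have hinner : ∑ i ∈ Finset.univ.filter (fun i => i₀ i = k), w ε (i₀ i) * sgn (ε i)
        = w ε k * S (A k) ε := by
      rw [hAdef]
      simp only []
      rw [show S (Finset.univ.filter (fun i => i₀ i = k)) ε
          = ∑ i ∈ Finset.univ.filter (fun i => i₀ i = k), sgn (ε i) from rfl, Finset.mul_sum]
      refine Finset.sum_congr rfl fun i hi => ?_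
      rw [Finset.mem_filter] at hi
      rw [hi.2]
    calc ∑ i ∈ Finset.univ.filter (fun i => i₀ i = k), w ε (i₀ i) * sgn (ε i)
        = w ε k * S (A k) ε := hinner
      _ = a * max (S (A k) ε) 0 := by
          by_cases hs : 0 ≤ S (A k) ε
          · rw [show w ε k = a by simp [hwdef, hs], max_eq_left hs]
          · rw [show w ε k = 0 by simp [hwdef, hs],
              max_eq_right (le_of_not_ge hs), zero_mul, mul_zero]
  -- pointwise lower bound for the sSup
  have hlow : ∀ ε : Fin m → Bool,
      (1 / (m:ℝ)) * ((C * B / γ) * ∑ k : Fin h, a * max (S (A k) ε) 0)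
        ≤ sSup ((fun f => (1 / (m:ℝ)) * ∑ i, sgn (ε i) * f (x i)) '' Hs) := by
    intro ε
    have h1 : (1 / (m:ℝ)) * ∑ i, sgn (ε i) * ((1/γ) * (C * ⨆ j : Fin h, w ε j * (x i) j))
        ≤ sSup ((fun f => (1 / (m:ℝ)) * ∑ i, sgn (ε i) * f (x i)) '' Hs) :=
      le_csSup (hbdd ε) (Set.mem_image_of_mem _ (hmem ε))
    rw [hval ε] at h1
    exact h1
  -- expectations
  have hEB : EB m (fun ε => (1 / (m:ℝ)) * ((C * B / γ) * ∑ k : Fin h, a * max (S (A k) ε) 0))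
      ≤ rademacher m x Hs := by
    unfold rademacher EB
    have hsum : ∑ ε : Fin m → Bool,
        (1 / (m:ℝ)) * ((C * B / γ) * ∑ k : Fin h, a * max (S (A k) ε) 0)
        ≤ ∑ ε : Fin m → Bool,
          sSup ((fun f => (1 / (m:ℝ)) * ∑ i, sgn (ε i) * f (x i)) '' Hs) :=
      Finset.sum_le_sum fun ε _ => hlow ε
    exact (div_le_div_iff_of_pos_right (by positivity)).mpr hsum
  -- lower bound the expectation
  have hfinal : (1/10) * B * (Mp 0 * C) * (h : ℝ) ^ ((1:ℝ)/2 - 1/p) / (γ * Real.sqrt m)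
      ≤ EB m (fun ε => (1 / (m:ℝ)) * ((C * B / γ) * ∑ k : Fin h, a * max (S (A k) ε) 0)) := by
    set K : ℝ := (1/(m:ℝ)) * ((C*B/γ) * a) with hKdef
    have hK : 0 < K := by positivity
    have hEB1 : EB m (fun ε => (1 / (m:ℝ)) * ((C * B / γ) * ∑ k : Fin h, a * max (S (A k) ε) 0))
        = K * ∑ k : Fin h, (∑ ε : Fin m → Bool, max (S (A k) ε) 0)/2^m := by
      unfold EB
      have e : ∀ ε : Fin m → Bool,
          (1/(m:ℝ))*((C*B/γ) * ∑ k : Fin h, a * max (S (A k) ε) 0)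
            = K * ∑ k : Fin h, max (S (A k) ε) 0 := by
        intro ε
        rw [show (∑ k : Fin h, a * max (S (A k) ε) 0)
            = a * ∑ k : Fin h, max (S (A k) ε) 0 from (Finset.mul_sum _ _ _).symm, hKdef]
        ring
      rw [Finset.sum_congr rfl fun ε _ => e ε, ← Finset.mul_sum, mul_div_assoc,
        Finset.sum_comm, Finset.sum_div]
    have hcard : ∀ k : Fin h, (m/h : ℕ) ≤ (A k).card := by
      intro k
      have h1 := card_fiber h0 hm k
      have heq : (A k) = Finset.univ.filter (fun i : Fin m => (i:ℕ) % h = (k:ℕ)) := by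
        rw [hAdef]
        apply Finset.filter_congr
        intro i _
        simp [hi₀, Fin.ext_iff]
      rw [heq]
      exact h1
    have hdiv : (m:ℝ)/(2*h) ≤ ((m/h : ℕ) : ℝ) := by
      have h1 : 1 ≤ m / h := (Nat.one_le_div_iff h0).mpr hm
      have e := Nat.div_add_mod m h
      have hmod : m % h < h := Nat.mod_lt _ h0
      have h2 : m ≤ 2 * (h * (m/h)) := by
        have h3 : h * 1 ≤ h * (m/h) := Nat.mul_le_mul_left h h1
        omega
      rw [div_le_iff₀ (by positivity)]
      calc (m:ℝ) ≤ 2 * ((h:ℝ) * ((m/h : ℕ):ℝ)) := by exact_mod_cast h2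
        _ = ((m/h : ℕ):ℝ) * (2 * h) := by ring
    have hEk : ∀ k : Fin h, Real.sqrt ((m:ℝ)/(6*h))/2
        ≤ (∑ ε : Fin m → Bool, max (S (A k) ε) 0)/2^m := by
      intro k
      have h1 : Real.sqrt ((m:ℝ)/(6*h)) ≤ Real.sqrt (((A k).card : ℝ)/3) := by
        apply Real.sqrt_le_sqrt
        have h2 : (m:ℝ)/(2*h) ≤ ((A k).card : ℝ) :=
          le_trans hdiv (by exact_mod_cast hcard k)
        calc (m:ℝ)/(6*h) = ((m:ℝ)/(2*h))/3 := by ring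
          _ ≤ ((A k).card : ℝ)/3 := by linarith
      have h2 := sum_abs_S (A k)
      have h3 := sum_max_S (A k)
      have h4 : (2:ℝ)^m * Real.sqrt ((m:ℝ)/(6*h)) ≤ ∑ ε : Fin m → Bool, |S (A k) ε| :=
        le_trans (mul_le_mul_of_nonneg_left h1 (by positivity)) h2
      rw [h3, div_le_div_iff₀ (by norm_num) (by positivity)]
      nlinarith [h4, pow_pos (show (0:ℝ) < 2 by norm_num) m,
        Real.sqrt_nonneg ((m:ℝ)/(6*h))]
    have hsumk : (h:ℝ) * (Real.sqrt ((m:ℝ)/(6*h))/2)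
        ≤ ∑ k : Fin h, (∑ ε : Fin m → Bool, max (S (A k) ε) 0)/2^m := by
      calc (h:ℝ) * (Real.sqrt ((m:ℝ)/(6*h))/2)
          = ∑ _k : Fin h, Real.sqrt ((m:ℝ)/(6*h))/2 := by
            rw [Finset.sum_const, Finset.card_univ, Fintype.card_fin, nsmul_eq_mul]
        _ ≤ _ := Finset.sum_le_sum fun k _ => hEk k
    rw [hEB1]
    refine le_trans ?_ (mul_le_mul_of_nonneg_left hsumk hK.le)
    -- pure arithmetic
    set s : ℝ := Real.sqrt m with hsdef
    set t : ℝ := Real.sqrt h with htdef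
    set u : ℝ := Real.sqrt 6 with hudef
    have hs : 0 < s := Real.sqrt_pos.mpr hmR
    have ht : 0 < t := Real.sqrt_pos.mpr hhR
    have hu : 0 < u := Real.sqrt_pos.mpr (by norm_num)
    have hss : s * s = (m:ℝ) := Real.mul_self_sqrt hmR.le
    have htt : t * t = (h:ℝ) := Real.mul_self_sqrt hhR.le
    have huu : u * u = 6 := Real.mul_self_sqrt (by norm_num)
    have e1 : (h:ℝ) ^ ((1:ℝ)/2 - 1/p) = t * r := by
      rw [show (1:ℝ)/2 - 1/p = 1/2 + (-(1/p)) by ring, Real.rpow_add hhR, hrdef,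
        htdef, Real.sqrt_eq_rpow]
    have e2 : Real.sqrt ((m:ℝ)/(6*h)) = s/(u*t) := by
      rw [Real.sqrt_div hmR.le, Real.sqrt_mul (by norm_num : (0:ℝ) ≤ 6)]
    have hu5 : u ≤ 5 := by
      rw [hudef, show (5:ℝ) = Real.sqrt 25 by
        rw [show (25:ℝ) = 5^2 by norm_num, Real.sqrt_sq (by norm_num)]]
      exact Real.sqrt_le_sqrt (by norm_num)
    have hinv : (1:ℝ)/10 ≤ 1/(2*u) := by
      apply one_div_le_one_div_of_le (by positivity)
      linarith
    set F : ℝ := B * (Mp 0 * C) * (t * r) / (γ * s) with hFdef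
    have hF : 0 ≤ F := by positivity
    have eL : (1:ℝ)/10 * B * (Mp 0 * C) * (h : ℝ) ^ ((1:ℝ)/2 - 1/p) / (γ * s)
        = F * (1/10) := by
      rw [e1, hFdef]; ring
    have eR : K * ((h:ℝ) * (Real.sqrt ((m:ℝ)/(6*h))/2)) = F * (1/(2*u)) := by
      rw [e2, hKdef, hadef, hFdef, ← hss, ← htt]
      field_simp
    rw [eL, eR]
    exact mul_le_mul_of_nonneg_left hinv hF
  have hprod : ∏ j ∈ Finset.range d, Mp j = Mp 0 * C := by
    rw [hCdef, Finset.range_eq_Ico, Finset.prod_eq_prod_Ico_succ_bot hd]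
  rw [ge_iff_le, hprod]
  calc (1:ℝ)/10 * B * (Mp 0 * C) * (h : ℝ) ^ ((1:ℝ)/2 - 1/p) / (γ * Real.sqrt m)
      ≤ _ := hfinal
    _ ≤ rademacher m x Hs := hEB
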